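/- arXiv:1511.01353 — 3 statements merged into one kernel-verified Lean document; each statement's English description precedes it below -/
import Mathlib

section
/- For all real numbers x and t, the series Σ_{n=0}^∞ He_n(x)·tⁿ/n! converges absolutely and its sum equals exp(x·t − t²/2). -/
/-- Probabilists' Hermite polynomials evaluated over ℝ. -/
noncomputable def He (n : ℕ) (x : ℝ) : ℝ := Polynomial.aeval x (Polynomial.hermite n)

open scoped Nat

private lemma fact_two_mul (j : ℕ) : (2 * j)! = 2 ^ j * j ! * (2 * j - 1)‼ := by
  cases j with
  | zero => rfl
  | succ j =>
    have h1 : 2 * (j + 1) = (2 * j + 1) + 1 := by ring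
    rw [h1, Nat.factorial_eq_mul_doubleFactorial]
    have h2 : 2 * j + 1 + 1 = 2 * (j + 1) := by ring
    rw [h2, Nat.doubleFactorial_two_mul]
    have h3 : 2 * (j + 1) - 1 = 2 * j + 1 := by omega
    rw [h3]

private lemma key_nat (n j : ℕ) (h : 2 * j ≤ n) :
    (2 * j - 1)‼ * n.choose (n - 2 * j) * ((n - 2 * j)! * (2 ^ j * j !)) = n ! := by
  have h1 := Nat.choose_mul_factorial_mul_factorial (Nat.sub_le n (2 * j))
  have h2 : n - (n - 2 * j) = 2 * j := by omega
  rw [h2, fact_two_mul] at h1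
  rw [← h1]; ring

private lemma He_eq_sum (n : ℕ) (x : ℝ) :
    He n x = ∑ j ∈ Finset.range (n / 2 + 1),
      ((-1 : ℝ) ^ j * ((2 * j - 1)‼ : ℕ) * (n.choose (n - 2 * j) : ℕ)) * x ^ (n - 2 * j) := by
  set F : ℕ → ℝ := fun i => ((Polynomial.hermite n).coeff i : ℝ) * x ^ i with hF
  have h0 : He n x = ∑ i ∈ Finset.range (n + 1), F i := by
    rw [He, Polynomial.aeval_eq_sum_range, Polynomial.natDegree_hermite]
    refine Finset.sum_congr rfl fun i _ => ?_
    simp [hF, zsmul_eq_mul]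
  have himg : (Finset.range (n / 2 + 1)).image (fun j => n - 2 * j) ⊆ Finset.range (n + 1) := by
    intro i hi
    simp only [Finset.mem_image, Finset.mem_range] at hi ⊢
    omega
  have hinj : ∀ a ∈ Finset.range (n / 2 + 1), ∀ b ∈ Finset.range (n / 2 + 1),
      n - 2 * a = n - 2 * b → a = b := by
    intro a ha b hb hab
    simp only [Finset.mem_range] at ha hb
    omega
  have h1 : ∑ j ∈ Finset.range (n / 2 + 1),
      ((-1 : ℝ) ^ j * ((2 * j - 1)‼ : ℕ) * (n.choose (n - 2 * j) : ℕ)) * x ^ (n - 2 * j)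
      = ∑ j ∈ Finset.range (n / 2 + 1), F (n - 2 * j) := by
    refine Finset.sum_congr rfl fun j hj => ?_
    simp only [Finset.mem_range] at hj
    have h2j : 2 * j ≤ n := by omega
    simp only [hF]
    rw [Polynomial.coeff_hermite_of_even_add (by
      refine ⟨n - j, by omega⟩)]
    have h3 : n - (n - 2 * j) = 2 * j := by omega
    rw [h3]
    have h4 : (2 * j) / 2 = j := by omega
    rw [h4]
    push_cast
    ring
  have h2 : ∑ j ∈ Finset.range (n / 2 + 1), F (n - 2 * j)
      = ∑ i ∈ (Finset.range (n / 2 + 1)).image (fun j => n - 2 * j), F i :=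
    (Finset.sum_image hinj).symm
  have h3 : ∑ i ∈ (Finset.range (n / 2 + 1)).image (fun j => n - 2 * j), F i
      = ∑ i ∈ Finset.range (n + 1), F i := by
    refine Finset.sum_subset himg fun i hi hni => ?_
    simp only [Finset.mem_range] at hi
    simp only [Finset.mem_image, Finset.mem_range, not_exists] at hni
    have hodd : Odd (n + i) := by
      rcases Nat.even_or_odd (n + i) with he | ho
      · exfalso
        rcases he with ⟨m, hm⟩
        refine hni ((n - i) / 2) ⟨by omega, by omega⟩ |>.elim
      · exact ho
    simp [hF, Polynomial.coeff_hermite_of_odd_add hodd]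
  rw [h0, h1, h2, h3]

/-- The regrouping equivalence. -/
private def regroup : (Σ n : ℕ, Fin (n / 2 + 1)) ≃ ℕ × ℕ where
  toFun p := (p.1 - 2 * p.2.val, p.2.val)
  invFun p := ⟨p.1 + 2 * p.2, ⟨p.2, by omega⟩⟩
  left_inv := by
    rintro ⟨n, j, hj⟩
    have h2j : 2 * j ≤ n := by omega
    have hn : n - 2 * j + 2 * j = n := by omega
    refine Sigma.ext (by simpa using hn) ?_
    refine (Fin.heq_ext_iff (by simp [hn])).mpr rfl
  right_inv := by
    rintro ⟨i, j⟩
    simp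

set_option maxHeartbeats 1000000 in
/-- For all real `x` and `t`, the series `∑ He n x * t^n / n!` converges
absolutely and its sum equals `exp (x*t - t^2/2)`. -/
theorem hermite_generating_function (x t : ℝ) :
    Summable (fun n : ℕ => |He n x * t ^ n / (n.factorial : ℝ)|) ∧
    HasSum (fun n : ℕ => He n x * t ^ n / (n.factorial : ℝ))
      (Real.exp (x * t - t ^ 2 / 2)) := by
  set f : ℕ × ℕ → ℝ := fun p => (x * t) ^ p.1 / p.1! * ((-(t ^ 2 / 2)) ^ p.2 / p.2!) with hf
  -- exponential series
  have hexp : ∀ y : ℝ, HasSum (fun i : ℕ => y ^ i / i !) (Real.exp y) := by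
    intro y
    rw [Real.exp_eq_exp_ℝ]
    exact NormedSpace.expSeries_div_hasSum_exp y
  have hn1 : Summable fun i : ℕ => ‖(x * t) ^ i / (i ! : ℝ)‖ := by
    refine (Real.summable_pow_div_factorial |x * t|).congr fun i => ?_
    rw [Real.norm_eq_abs, abs_div, abs_pow, Nat.abs_cast]
  have hn2 : Summable fun j : ℕ => ‖(-(t ^ 2 / 2)) ^ j / (j ! : ℝ)‖ := by
    refine (Real.summable_pow_div_factorial |(-(t ^ 2 / 2))|).congr fun i => ?_
    rw [Real.norm_eq_abs, abs_div, abs_pow, Nat.abs_cast]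
  have hsumf : Summable f := summable_mul_of_summable_norm hn1 hn2
  have hprodsum : HasSum f (Real.exp (x * t) * Real.exp (-(t ^ 2 / 2))) :=
    (hexp (x * t)).mul (hexp (-(t ^ 2 / 2))) hsumf
  have hE : Real.exp (x * t) * Real.exp (-(t ^ 2 / 2)) = Real.exp (x * t - t ^ 2 / 2) := by
    rw [← Real.exp_add]; ring_nf
  rw [hE] at hprodsum
  -- regroup by total degree
  have hsig : HasSum (f ∘ regroup) (Real.exp (x * t - t ^ 2 / 2)) :=
    regroup.hasSum_iff.mpr hprodsum
  have hfiber : ∀ n : ℕ, HasSum (fun j : Fin (n / 2 + 1) => (f ∘ regroup) ⟨n, j⟩)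
      (∑ j : Fin (n / 2 + 1), (f ∘ regroup) ⟨n, j⟩) := fun n => hasSum_fintype _
  have hmain : HasSum (fun n : ℕ => ∑ j : Fin (n / 2 + 1), (f ∘ regroup) ⟨n, j⟩)
      (Real.exp (x * t - t ^ 2 / 2)) := hsig.sigma hfiber
  -- identify the fiber sums
  have hterm : ∀ n : ℕ, ∀ j ∈ Finset.range (n / 2 + 1),
      f (n - 2 * j, j) = ((-1 : ℝ) ^ j * ((2 * j - 1)‼ : ℕ) * (n.choose (n - 2 * j) : ℕ)
        * x ^ (n - 2 * j) * t ^ n) / n ! := by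
    intro n j hj
    simp only [Finset.mem_range] at hj
    have h2j : 2 * j ≤ n := by omega
    have hfac : (n ! : ℝ) = ((2 * j - 1)‼ : ℕ) * (n.choose (n - 2 * j) : ℕ)
        * ((n - 2 * j)! * (2 ^ j * j !)) := by
      rw [← key_nat n j h2j]; push_cast; ring
    have hne1 : ((n - 2 * j)! : ℝ) ≠ 0 := Nat.cast_ne_zero.mpr (Nat.factorial_ne_zero _)
    have hne2 : ((j : ℕ)! : ℝ) ≠ 0 := Nat.cast_ne_zero.mpr (Nat.factorial_ne_zero _)
    have hne3 : (2 : ℝ) ^ j ≠ 0 := pow_ne_zero _ two_ne_zero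
    have hne4 : (((2 * j - 1)‼ : ℕ) : ℝ) ≠ 0 :=
      Nat.cast_ne_zero.mpr (Nat.doubleFactorial_pos _).ne'
    have hne5 : ((n.choose (n - 2 * j) : ℕ) : ℝ) ≠ 0 :=
      Nat.cast_ne_zero.mpr (Nat.choose_pos (Nat.sub_le n (2 * j))).ne'
    have htpow : (x * t) ^ (n - 2 * j) * ((-(t ^ 2 / 2)) ^ j)
        = (-1) ^ j * x ^ (n - 2 * j) * t ^ n / 2 ^ j := by
      have e1 : (-(t ^ 2 / 2)) ^ j = (-1) ^ j * t ^ (2 * j) / 2 ^ j := by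
        rw [neg_pow, div_pow, ← pow_mul]
        ring
      have e2 : t ^ (n - 2 * j) * t ^ (2 * j) = t ^ n := by
        rw [← pow_add]; congr 1; omega
      rw [e1]
      calc (x * t) ^ (n - 2 * j) * ((-1) ^ j * t ^ (2 * j) / 2 ^ j)
          = x ^ (n - 2 * j) * (t ^ (n - 2 * j) * t ^ (2 * j)) * (-1) ^ j / 2 ^ j := by
            rw [mul_pow]; ring
        _ = (-1) ^ j * x ^ (n - 2 * j) * t ^ n / 2 ^ j := by rw [e2]; ring

    simp only [hf]
    rw [div_mul_div_comm, htpow, div_div,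
      div_eq_div_iff (mul_ne_zero hne3 (mul_ne_zero hne1 hne2))
        (Nat.cast_ne_zero.mpr (Nat.factorial_ne_zero n)), hfac]
    ring
  have hfib_eq : (fun n : ℕ => ∑ j : Fin (n / 2 + 1), (f ∘ regroup) ⟨n, j⟩)
      = fun n : ℕ => He n x * t ^ n / n ! := by
    funext n
    have h1 : (∑ j : Fin (n / 2 + 1), (f ∘ regroup) ⟨n, j⟩)
        = ∑ j ∈ Finset.range (n / 2 + 1), f (n - 2 * j, j) :=
      calc (∑ j : Fin (n / 2 + 1), (f ∘ regroup) ⟨n, j⟩)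
          = ∑ j : Fin (n / 2 + 1), f (n - 2 * j.val, j.val) := rfl
        _ = ∑ j ∈ Finset.range (n / 2 + 1), f (n - 2 * j, j) :=
            Fin.sum_univ_eq_sum_range (fun j => f (n - 2 * j, j)) (n / 2 + 1)
    rw [h1, Finset.sum_congr rfl (hterm n), He_eq_sum, Finset.sum_mul, Finset.sum_div]
  rw [hfib_eq] at hmain
  refine ⟨?_, hmain⟩
  -- absolute convergence
  have habs : Summable fun p : ℕ × ℕ => |f p| := by
    refine (summable_mul_of_summable_norm hn1 hn2).abs.congr fun p => ?_
    rfl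
  have habs' : Summable fun q : (Σ n : ℕ, Fin (n / 2 + 1)) => |f (regroup q)| :=
    regroup.summable_iff.mpr habs
  have hT : Summable fun n : ℕ => ∑ j : Fin (n / 2 + 1), |f (regroup ⟨n, j⟩)| := by
    have := habs'.sigma
    refine this.congr fun n => ?_
    exact tsum_fintype _
  refine hT.of_nonneg_of_le (fun n => abs_nonneg _) fun n => ?_
  have := congrFun hfib_eq n
  rw [← this]
  calc |∑ j : Fin (n / 2 + 1), (f ∘ regroup) ⟨n, j⟩|
      ≤ ∑ j : Fin (n / 2 + 1), |(f ∘ regroup) ⟨n, j⟩| := Finset.abs_sum_le_sum_abs _ _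
    _ = ∑ j : Fin (n / 2 + 1), |f (regroup ⟨n, j⟩)| := rfl
end

section
/- For every α ∈ ℕ and every real t, the Taylor series of the Hermite function h_α about 0 converges absolutely to h_α(t); explicitly, h_α(t) = Σ_{β=0}^∞ ((−t)^β/β!)·He_{α+β}(0). -/
/-- Hermite functions `h n x = exp (-x^2/2) * He n x`. -/
noncomputable def hermiteFun (n : ℕ) (x : ℝ) : ℝ := Real.exp (-x ^ 2 / 2) * He n x

open Polynomial

/-- Evaluation of an integer polynomial at a real number, coerced to `ℂ`. -/
lemma aeval_hermite_ofReal (n : ℕ) (x : ℝ) :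
    Polynomial.aeval (x : ℂ) (Polynomial.hermite n)
      = ((Polynomial.aeval x (Polynomial.hermite n) : ℝ) : ℂ) := by
  have := Polynomial.aeval_algHom_apply Complex.ofRealHom.toIntAlgHom x (Polynomial.hermite n)
  simpa using this

/-- Complex version of the Rodrigues-type formula for Hermite polynomials. -/
lemma crodrigues (n : ℕ) (x : ℂ) :
    deriv^[n] (fun z : ℂ => Complex.exp (-(z ^ 2 / 2))) x =
    (-1 : ℂ) ^ n * Polynomial.aeval x (Polynomial.hermite n) * Complex.exp (-(x ^ 2 / 2)) := by
  rw [mul_assoc]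
  induction' n with n ih generalizing x
  · rw [Function.iterate_zero_apply, pow_zero, one_mul, hermite_zero, C_1, map_one, one_mul]
  · replace ih : deriv^[n] _ = _ := funext ih
    have deriv_gaussian :
        deriv (fun y : ℂ => Complex.exp (-(y ^ 2 / 2))) x = -x * Complex.exp (-(x ^ 2 / 2)) := by
      rw [deriv_cexp (by fun_prop)]
      simp
      ring
    rw [Function.iterate_succ_apply', ih, deriv_const_mul_field, deriv_fun_mul, pow_succ (-1 : ℂ),
      deriv_gaussian, hermite_succ, map_sub, map_mul, aeval_X, Polynomial.deriv_aeval]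
    · ring
    · apply Polynomial.differentiable_aeval
    · apply DifferentiableAt.cexp
      fun_prop

/-- The Taylor series of the Hermite function `h α` about `0` converges
absolutely to `h α t`: `h α t = ∑ ((-t)^β / β!) * He (α+β) 0`. -/
theorem hermiteFun_taylor_series (α : ℕ) (t : ℝ) :
    Summable (fun β : ℕ => |(-t) ^ β / (β.factorial : ℝ) * He (α + β) 0|) ∧
    HasSum (fun β : ℕ => (-t) ^ β / (β.factorial : ℝ) * He (α + β) 0)
      (hermiteFun α t) := by
  set g : ℂ → ℂ := fun z =>
    (-1 : ℂ) ^ α * Polynomial.aeval z (Polynomial.hermite α) * Complex.exp (-(z ^ 2 / 2))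
    with hg_def
  have hg : Differentiable ℂ g := by
    apply Differentiable.mul
    · exact (differentiable_const _).mul (Polynomial.differentiable_aeval _)
    · exact Differentiable.cexp (by fun_prop)
  have hgf : g = deriv^[α] (fun z : ℂ => Complex.exp (-(z ^ 2 / 2))) := by
    funext x; rw [crodrigues]
  have iter : ∀ β : ℕ, iteratedDeriv β g 0 = (-1 : ℂ) ^ (α + β) * ((He (α + β) 0 : ℝ) : ℂ) := by
    intro β
    have h0 : (0 : ℂ) = ((0 : ℝ) : ℂ) := by norm_num
    rw [iteratedDeriv_eq_iterate, hgf, ← Function.iterate_add_apply, crodrigues, h0,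
      aeval_hermite_ofReal]
    simp [He, Nat.add_comm β α]
  have hRpos : (0 : ℝ) < |t| + 1 := by positivity
  set R : NNReal := ⟨|t| + 1, hRpos.le⟩ with hR
  have hRpos' : (0 : NNReal) < R := by
    rw [← NNReal.coe_lt_coe]; exact hRpos
  have hp : HasFPowerSeriesOnBall g (cauchyPowerSeries g 0 R) 0 R :=
    hg.differentiableOn.hasFPowerSeriesOnBall hRpos'
  have hnorm : ‖(t : ℂ)‖₊ < R := by
    rw [← NNReal.coe_lt_coe]
    simp only [coe_nnnorm, Complex.norm_real, Real.norm_eq_abs, hR, NNReal.coe_mk]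
    exact lt_add_one |t|
  have hmem : (t : ℂ) ∈ Metric.eball (0 : ℂ) R := by
    rw [mem_emetric_ball_zero_iff]
    exact_mod_cast hnorm
  have hmem' : (t : ℂ) ∈ Metric.eball (0 : ℂ) (cauchyPowerSeries g 0 R).radius :=
    Metric.eball_subset_eball hp.r_le hmem
  have S := (cauchyPowerSeries g 0 R).summable_norm_apply hmem'
  have hsum := hp.hasSum_iteratedFDeriv hmem
  have hsq : ((-1 : ℂ)) ^ α * (-1 : ℂ) ^ α = 1 := by
    rw [← pow_add]; exact Even.neg_one_pow ⟨α, rfl⟩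
  have hterm : ∀ n : ℕ, (n.factorial : ℂ)⁻¹ • iteratedFDeriv ℂ n g 0 (fun _ => (t : ℂ))
      = (-1 : ℂ) ^ α * (((-t) ^ n / n.factorial * He (α + n) 0 : ℝ) : ℂ) := by
    intro n
    rw [iteratedFDeriv_apply_eq_iteratedDeriv_mul_prod, iter]
    simp only [smul_eq_mul, Finset.prod_const, Finset.card_fin]
    push_cast
    ring
  have hval : g (0 + (t : ℂ)) = (-1 : ℂ) ^ α * ((hermiteFun α t : ℝ) : ℂ) := by
    rw [zero_add]
    simp only [hg_def, hermiteFun, He]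
    rw [aeval_hermite_ofReal]
    push_cast [Complex.ofReal_exp]
    ring_nf
  have H2 : HasSum (fun n : ℕ => (((-t) ^ n / n.factorial * He (α + n) 0 : ℝ) : ℂ))
      ((hermiteFun α t : ℝ) : ℂ) := by
    have H3 := hsum.mul_left ((-1 : ℂ) ^ α)
    simp only [hterm, hval, ← mul_assoc, hsq, one_mul] at H3
    exact H3
  have hcoeff : ∀ n : ℕ, ‖cauchyPowerSeries g 0 R n fun _ => (t : ℂ)‖
      = |(-t) ^ n / (n.factorial : ℝ) * He (α + n) 0| := by
    intro n
    have hne : (n.factorial : ℂ) ≠ 0 := by exact_mod_cast n.factorial_ne_zero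
    have h1 := hp.factorial_smul (t : ℂ) n
    rw [iteratedFDeriv_apply_eq_iteratedDeriv_mul_prod, iter] at h1
    simp only [smul_eq_mul, Finset.prod_const, Finset.card_fin, nsmul_eq_mul] at h1
    have h2 : (cauchyPowerSeries g 0 R n fun _ => (t : ℂ))
        = (n.factorial : ℂ)⁻¹ * ((t : ℂ) ^ n * ((-1 : ℂ) ^ (α + n) * ((He (α + n) 0 : ℝ) : ℂ))) :=
      (eq_inv_mul_iff_mul_eq₀ hne).mpr h1
    rw [h2]
    simp [abs_mul, abs_div, abs_pow, abs_neg, Complex.norm_real, Real.norm_eq_abs,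
      norm_mul, norm_pow, norm_inv, abs_of_nonneg, div_eq_inv_mul]
    ring
  refine ⟨S.congr fun n => hcoeff n, Complex.hasSum_ofReal.mp H2⟩
end

section
/- For all real numbers x and y, exp(−(x−y)²/2) = Σ_{β=0}^∞ (y^β/β!) · ( Σ_{α=0}^∞ ((−x)^α/α!) · He_{α+β}(0) ), where for each β the inner series converges absolutely and the outer series converges absolutely. (Polynomial/Vandermonde double expansion of the flat Gaussian RBF kernel.) -/
open Polynomial Finset
open scoped Nat

private lemma He_zero_eq (n : ℕ) : He n 0 = ((Polynomial.hermite n).coeff 0 : ℝ) := by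
  simp [He, Polynomial.aeval_def, Polynomial.eval₂_at_zero]

private lemma He_even (m : ℕ) : He (2*m) 0 = (-1)^m * ((2*m-1)‼ : ℝ) := by
  rw [He_zero_eq, show 2*m = 2*m+0 from rfl, Polynomial.coeff_hermite_explicit]
  push_cast
  simp

private lemma He_odd {n : ℕ} (h : Odd n) : He n 0 = 0 := by
  rw [He_zero_eq, Polynomial.coeff_hermite_of_odd_add (by simpa using h)]
  simp

private lemma dfac_fac (m : ℕ) : (2*m-1)‼ * (2^m * m !) = (2*m)! := by
  cases m with
  | zero => rfl
  | succ k =>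
    rw [← Nat.doubleFactorial_two_mul, show 2*(k+1) = (2*k+1)+1 by ring,
      Nat.factorial_eq_mul_doubleFactorial, show (2*k+1)+1-1 = 2*k+1 by omega, mul_comm]

private lemma dfac_real (m : ℕ) : ((2*m-1)‼ : ℝ) = (2*m)! / (2^m * m !) := by
  rw [eq_div_iff (by positivity)]
  exact_mod_cast congrArg (Nat.cast (R := ℝ)) (dfac_fac m)

private lemma two_mul_inj : Function.Injective (fun m : ℕ => 2*m) :=
  fun a b h => by simp only at h; omega

private lemma not_range_odd {n : ℕ} (hn : n ∉ Set.range (fun m : ℕ => 2*m)) : Odd n := by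
  rcases Nat.even_or_odd n with h | h
  · obtain ⟨k, hk⟩ := h
    exact absurd ⟨k, by simp only; omega⟩ hn
  · exact h

private lemma gen1 (u : ℝ) : HasSum (fun n => He n 0 * u ^ n / n !) (Real.exp (-u^2/2)) := by
  rw [Real.exp_eq_exp_ℝ]
  have h0 := NormedSpace.expSeries_div_hasSum_exp (-u^2/2)
  have key : ((fun n => He n 0 * u ^ n / n !) ∘ (fun m : ℕ => 2*m)) =
      (fun m : ℕ => (-u^2/2)^m / m !) := by
    funext m
    simp only [Function.comp_apply]
    have h1 : ((2*m)! : ℝ) ≠ 0 := by positivity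
    have h2 : (m ! : ℝ) ≠ 0 := by positivity
    have h3 : (2:ℝ)^m ≠ 0 := by positivity
    rw [He_even, dfac_real, pow_mul, show (-u^2/2 : ℝ) = -1 * (u^2/2) by ring, mul_pow, div_pow]
    field_simp
  exact (Function.Injective.hasSum_iff two_mul_inj
    (fun n hn => by simp [He_odd (not_range_odd hn)])).mp (key ▸ h0)

private lemma gen2 (u : ℝ) : HasSum (fun n => |He n 0| * u ^ n / n !) (Real.exp (u^2/2)) := by
  rw [Real.exp_eq_exp_ℝ]
  have h0 := NormedSpace.expSeries_div_hasSum_exp (u^2/2)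
  have key : ((fun n => |He n 0| * u ^ n / n !) ∘ (fun m : ℕ => 2*m)) =
      (fun m : ℕ => (u^2/2)^m / m !) := by
    funext m
    simp only [Function.comp_apply]
    have h1 : ((2*m)! : ℝ) ≠ 0 := by positivity
    have h2 : (m ! : ℝ) ≠ 0 := by positivity
    have h3 : (2:ℝ)^m ≠ 0 := by positivity
    rw [He_even, abs_mul, abs_pow, abs_neg, abs_one, one_pow, one_mul,
      Nat.abs_cast, dfac_real, pow_mul, div_pow]
    field_simp
  exact (Function.Injective.hasSum_iff two_mul_inj
    (fun n hn => by simp [He_odd (not_range_odd hn)])).mp (key ▸ h0)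

private lemma antidiag_sum (a b : ℝ) (n : ℕ) :
    ∑ p ∈ Finset.HasAntidiagonal.antidiagonal n, a ^ p.1 / p.1 ! * (b ^ p.2 / p.2 !) = (a + b) ^ n / n ! := by
  rw [Finset.Nat.sum_antidiagonal_eq_sum_range_succ_mk, add_pow, Finset.sum_div]
  refine Finset.sum_congr rfl fun k hk => ?_
  have hk' : k ≤ n := Nat.lt_succ_iff.mp (Finset.mem_range.mp hk)
  rw [Nat.cast_choose ℝ hk']
  have h1 : (k ! : ℝ) ≠ 0 := by positivity
  have h2 : ((n-k)! : ℝ) ≠ 0 := by positivity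
  have h3 : (n ! : ℝ) ≠ 0 := by positivity
  field_simp

private noncomputable def Fxy (x y : ℝ) : ℕ × ℕ → ℝ := fun p =>
  y ^ p.1 / p.1 ! * ((-x) ^ p.2 / p.2 ! * He (p.2 + p.1) 0)

private lemma Fxy_antidiag_sum (x y : ℝ) (n : ℕ) :
    ∑ p ∈ Finset.HasAntidiagonal.antidiagonal n, Fxy x y p = He n 0 * ((y + -x) ^ n / n !) := by
  rw [← antidiag_sum y (-x) n, Finset.mul_sum]
  refine Finset.sum_congr rfl fun p hp => ?_
  have hpn : p.1 + p.2 = n := Finset.HasAntidiagonal.mem_antidiagonal.mp hp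
  simp only [Fxy, show p.2 + p.1 = n by omega]
  ring

private lemma Fxy_abs_antidiag_sum (x y : ℝ) (n : ℕ) :
    ∑ p ∈ Finset.HasAntidiagonal.antidiagonal n, |Fxy x y p| = |He n 0| * (|y| + |x|) ^ n / n ! := by
  have : ∀ p ∈ Finset.HasAntidiagonal.antidiagonal n,
      |Fxy x y p| = |He n 0| * (|y| ^ p.1 / p.1 ! * (|x| ^ p.2 / p.2 !)) := by
    intro p hp
    have hpn : p.1 + p.2 = n := Finset.HasAntidiagonal.mem_antidiagonal.mp hp
    simp only [Fxy, show p.2 + p.1 = n by omega, abs_mul, abs_div, abs_pow, abs_neg,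
      Nat.abs_cast]
    ring
  rw [Finset.sum_congr rfl this, ← Finset.mul_sum, antidiag_sum, mul_div_assoc]

private lemma Fxy_abs_summable (x y : ℝ) : Summable fun p => |Fxy x y p| := by
  have hsig : Summable (fun q : (Σ n : ℕ, (Finset.HasAntidiagonal.antidiagonal n : Finset (ℕ × ℕ))) =>
      |Fxy x y (q.2 : ℕ × ℕ)|) := by
    rw [summable_sigma_of_nonneg (fun _ => abs_nonneg _)]
    refine ⟨fun n => Summable.of_finite, ?_⟩
    have hval : (fun n : ℕ => ∑' p : (Finset.HasAntidiagonal.antidiagonal n : Finset (ℕ × ℕ)),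
        |Fxy x y (p : ℕ × ℕ)|) = fun n => |He n 0| * (|y| + |x|) ^ n / n ! := by
      funext n
      rw [Finset.tsum_subtype (Finset.HasAntidiagonal.antidiagonal n) (fun p => |Fxy x y p|)]
      exact Fxy_abs_antidiag_sum x y n
    rw [hval]
    exact (gen2 (|y| + |x|)).summable
  exact Finset.HasAntidiagonal.sigmaAntidiagonalEquivProd.summable_iff.mp hsig

private lemma Fxy_hasSum (x y : ℝ) : HasSum (Fxy x y) (Real.exp (-(x - y) ^ 2 / 2)) := by
  have hs : Summable (Fxy x y) := summable_abs_iff.mp (Fxy_abs_summable x y)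
  obtain ⟨S, hS⟩ := hs
  have h1 : HasSum ((Fxy x y) ∘ Finset.HasAntidiagonal.sigmaAntidiagonalEquivProd) S :=
    Finset.HasAntidiagonal.sigmaAntidiagonalEquivProd.hasSum_iff.mpr hS
  have h2 : HasSum (fun n => He n 0 * (y - x) ^ n / n !) S := by
    refine HasSum.sigma h1 fun n => ?_
    have h3 := hasSum_fintype
      (fun p : (Finset.HasAntidiagonal.antidiagonal n : Finset (ℕ × ℕ)) => Fxy x y p)
    rw [Finset.sum_coe_sort (Finset.HasAntidiagonal.antidiagonal n) (Fxy x y), Fxy_antidiag_sum] at h3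
    have h4 : He n 0 * ((y + -x) ^ n / n !) = He n 0 * (y - x) ^ n / n ! := by
      rw [sub_eq_add_neg]; ring
    exact h4 ▸ h3
  have h5 : S = Real.exp (-(x - y) ^ 2 / 2) := by
    have := gen1 (y - x)
    rw [show (-(y - x) ^ 2 / 2 : ℝ) = -(x - y) ^ 2 / 2 by ring] at this
    exact h2.unique this
  exact h5 ▸ hS

set_option maxHeartbeats 1600000 in
/-- Polynomial (Vandermonde) double expansion of the flat Gaussian RBF kernel:
`exp (-(x-y)^2/2) = ∑_β (y^β/β!) * (∑_α ((-x)^α/α!) * He (α+β) 0)`,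
with the inner series converging absolutely for each `β`, and the outer
series converging absolutely. -/
theorem gaussian_kernel_vandermonde_expansion (x y : ℝ) :
    (∀ β : ℕ, Summable (fun α : ℕ => |(-x) ^ α / (α.factorial : ℝ) * He (α + β) 0|)) ∧
    Summable (fun β : ℕ =>
      |y ^ β / (β.factorial : ℝ) * ∑' α : ℕ, (-x) ^ α / (α.factorial : ℝ) * He (α + β) 0|) ∧
    HasSum (fun β : ℕ =>
        y ^ β / (β.factorial : ℝ) * ∑' α : ℕ, (-x) ^ α / (α.factorial : ℝ) * He (α + β) 0)
      (Real.exp (-(x - y) ^ 2 / 2)) := by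
  have hin : ∀ β : ℕ, Summable (fun α : ℕ => |(-x) ^ α / (α.factorial : ℝ) * He (α + β) 0|) := by
    intro β
    have hb : (β ! : ℝ) ≠ 0 := by positivity
    have h := ((Fxy_abs_summable x 1).prod_factor β).mul_left (β ! : ℝ)
    refine h.congr fun α => ?_
    show (β ! : ℝ) * |(1:ℝ) ^ β / (β ! : ℝ) * ((-x) ^ α / α ! * He (α + β) 0)| = _
    rw [one_pow, abs_mul, abs_div, abs_one, Nat.abs_cast]
    field_simp
  refine ⟨hin, ?_, ?_⟩
  · have houter : Summable fun β : ℕ => ∑' α : ℕ, |Fxy x y (β, α)| :=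
      ((summable_prod_of_nonneg (fun _ => abs_nonneg _)).mp (Fxy_abs_summable x y)).2
    refine Summable.of_nonneg_of_le (fun β => abs_nonneg _) (fun β => ?_) houter
    have hts : Summable fun α : ℕ => (-x) ^ α / (α.factorial : ℝ) * He (α + β) 0 :=
      summable_abs_iff.mp (hin β)
    calc |y ^ β / (β.factorial : ℝ) * ∑' α : ℕ, (-x) ^ α / (α.factorial : ℝ) * He (α + β) 0|
        = |y ^ β / (β.factorial : ℝ)| * |∑' α : ℕ, (-x) ^ α / (α.factorial : ℝ) * He (α + β) 0| :=
          abs_mul _ _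
      _ ≤ |y ^ β / (β.factorial : ℝ)| *
            ∑' α : ℕ, |(-x) ^ α / (α.factorial : ℝ) * He (α + β) 0| := by
          refine mul_le_mul_of_nonneg_left ?_ (abs_nonneg _)
          have hsum : Summable fun α : ℕ => ‖(-x) ^ α / (α.factorial : ℝ) * He (α + β) 0‖ := by
            simpa only [Real.norm_eq_abs] using hin β
          simpa only [Real.norm_eq_abs] using norm_tsum_le_tsum_norm hsum
      _ = ∑' α : ℕ, |Fxy x y (β, α)| := by
          rw [← tsum_mul_left]
          exact tsum_congr fun α => by rw [Fxy, ← abs_mul]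
  · refine HasSum.prod_fiberwise (Fxy_hasSum x y) fun β => ?_
    have hts : Summable fun α : ℕ => (-x) ^ α / (α.factorial : ℝ) * He (α + β) 0 :=
      summable_abs_iff.mp (hin β)
    exact hts.hasSum.mul_left _
end
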